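/- A sequence (u n) of words over ℕ, viewed in Z, converges in Z if and only if it is eventually constant, or there exists N ∈ ℕ such that every letter of every word u n lies in {0,…,N−1} and the lengths |u n| tend to infinity; in the latter case the limit is ∞. -/

import Mathlib

open OnePoint Filter Topology

/-- The list of letters of a word in the free semigroup on `ℕ`. -/
def wordLetters (u : FreeSemigroup ℕ) : List ℕ := u.head :: u.tail

/-- For a subset `U` of `OnePoint (FreeSemigroup ℕ)` and `k : ℕ`, the set of words
all of whose letters lie in `{0, …, k-1}` and which do not belong to `U`. -/
def boundedOutside (U : Set (OnePoint (FreeSemigroup ℕ))) (k : ℕ) : Set (FreeSemigroup ℕ) :=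
  {u | (∀ x ∈ wordLetters u, x < k) ∧ (u : OnePoint (FreeSemigroup ℕ)) ∉ U}

/-- The inductive-limit topology on `OnePoint (FreeSemigroup ℕ)` of the one-point
compactifications of the discrete free semigroups on the finite alphabets
`{0, …, k-1}`: a set `U` is open iff, whenever `∞ ∈ U`, for every `k` only finitely
many words with letters in `{0, …, k-1}` lie outside `U`. -/
def Ztop : TopologicalSpace (OnePoint (FreeSemigroup ℕ)) where
  IsOpen U := ∞ ∈ U → ∀ k : ℕ, (boundedOutside U k).Finite
  isOpen_univ := fun _ k => by
    convert Set.finite_empty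
    simp [boundedOutside]
  isOpen_inter := fun U V hU hV h k => by
    refine ((hU h.1 k).union (hV h.2 k)).subset ?_
    rintro u ⟨hb, hn⟩
    by_cases hu : (u : OnePoint (FreeSemigroup ℕ)) ∈ U
    · exact Or.inr ⟨hb, fun hv => hn ⟨hu, hv⟩⟩
    · exact Or.inl ⟨hb, hu⟩
  isOpen_sUnion := fun S hS h k => by
    obtain ⟨U, hUS, hU⟩ := h
    refine (hS U hUS hU k).subset ?_
    rintro u ⟨hb, hn⟩
    exact ⟨hb, fun h' => hn ⟨U, hUS, h'⟩⟩

lemma wordLetters_injective : Function.Injective wordLetters := by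
  rintro ⟨a, l⟩ ⟨b, m⟩ h
  simpa [wordLetters, FreeSemigroup.ext_iff] using h

lemma wordLetters_length (w : FreeSemigroup ℕ) : (wordLetters w).length = w.length := rfl

lemma finite_lists (k K : ℕ) : {l : List ℕ | (∀ x ∈ l, x < k) ∧ l.length ≤ K}.Finite := by
  induction K with
  | zero =>
    refine Set.Finite.subset (Set.finite_singleton ([] : List ℕ)) ?_
    rintro l ⟨-, hl⟩
    simpa using List.length_eq_zero_iff.mp (Nat.le_zero.mp hl)
  | succ K ih =>
    refine Set.Finite.subset (Set.Finite.union (Set.finite_singleton ([] : List ℕ))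
      (Set.Finite.biUnion (Set.finite_Iio k) (fun x _ => ih.image (fun l => x :: l)))) ?_
    rintro l ⟨hb, hl⟩
    cases l with
    | nil => exact Or.inl rfl
    | cons a t =>
      refine Or.inr (Set.mem_biUnion (show a ∈ Set.Iio k from hb a List.mem_cons_self)
        ⟨t, ⟨fun x hx => hb x (List.mem_cons_of_mem a hx), ?_⟩, rfl⟩)
      simpa using hl
  
lemma finite_words (k K : ℕ) :
    {w : FreeSemigroup ℕ | (∀ x ∈ wordLetters w, x < k) ∧ w.length ≤ K}.Finite := by
  have : {w : FreeSemigroup ℕ | (∀ x ∈ wordLetters w, x < k) ∧ w.length ≤ K}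
      = wordLetters ⁻¹' {l : List ℕ | (∀ x ∈ l, x < k) ∧ l.length ≤ K} := by
    ext w; simp [wordLetters_length]
  rw [this]
  exact Set.Finite.preimage (wordLetters_injective.injOn) (finite_lists k K)

lemma le_foldr_max {l : List ℕ} {x : ℕ} (h : x ∈ l) : x ≤ l.foldr max 0 := by
  induction l with
  | nil => simp at h
  | cons a t ih =>
    rcases List.mem_cons.mp h with rfl | h
    · exact le_max_left _ _
    · exact le_trans (ih h) (le_max_right _ _)

lemma isOpen_Ztop {U : Set (OnePoint (FreeSemigroup ℕ))} :
    IsOpen[Ztop] U ↔ (∞ ∈ U → ∀ k, (boundedOutside U k).Finite) := by exact Iff.rfl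

lemma singleton_open_Ztop (w : FreeSemigroup ℕ) :
    IsOpen[Ztop] {(w : OnePoint (FreeSemigroup ℕ))} :=
  isOpen_Ztop.mpr fun h => absurd h (by simp)

lemma tendsto_infty_Ztop (u : ℕ → FreeSemigroup ℕ) (N : ℕ)
    (hb : ∀ n, ∀ x ∈ wordLetters (u n), x < N)
    (hl : Tendsto (fun n => (u n).length) atTop atTop) :
    @Tendsto ℕ (OnePoint (FreeSemigroup ℕ)) (fun n => ↑(u n)) atTop (@nhds _ Ztop ∞) := by
  letI := Ztop
  rw [tendsto_nhds]
  intro U hU hmem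
  have hf : (boundedOutside U N).Finite := isOpen_Ztop.mp hU hmem N
  obtain ⟨M, hM⟩ : ∃ M, ∀ w ∈ boundedOutside U N, w.length ≤ M := by
    obtain ⟨M, hM⟩ := (hf.image FreeSemigroup.length).bddAbove
    exact ⟨M, fun w hw => hM (Set.mem_image_of_mem _ hw)⟩
  filter_upwards [hl.eventually_gt_atTop M] with n hn
  by_contra h
  exact absurd (hM (u n) ⟨hb n, h⟩) (not_le.mpr hn)

/-- A sequence of words over `ℕ`, viewed in `Z = OnePoint (FreeSemigroup ℕ)` with the
inductive-limit topology, converges iff it is eventually constant or there is `N` such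
that all letters of all terms lie in `{0, …, N-1}` and the lengths tend to infinity;
in the latter case the limit is `∞`. -/
theorem converges_iff_Ztop (u : ℕ → FreeSemigroup ℕ) :
    letI : TopologicalSpace (OnePoint (FreeSemigroup ℕ)) := Ztop
    ((∃ L : OnePoint (FreeSemigroup ℕ),
        Tendsto (fun n => ((u n : OnePoint (FreeSemigroup ℕ)))) atTop (𝓝 L))
      ↔ ((∃ N, ∀ m ≥ N, u m = u N)
          ∨ (∃ N : ℕ, (∀ n, ∀ x ∈ wordLetters (u n), x < N)
              ∧ Tendsto (fun n => (u n).length) atTop atTop)))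
    ∧ ((∃ N : ℕ, (∀ n, ∀ x ∈ wordLetters (u n), x < N)
          ∧ Tendsto (fun n => (u n).length) atTop atTop)
        → Tendsto (fun n => ((u n : OnePoint (FreeSemigroup ℕ)))) atTop (𝓝 ∞)) := by
  letI := Ztop
  have h2 : (∃ N : ℕ, (∀ n, ∀ x ∈ wordLetters (u n), x < N)
      ∧ Tendsto (fun n => (u n).length) atTop atTop)
      → Tendsto (fun n => ((u n : OnePoint (FreeSemigroup ℕ)))) atTop (𝓝 ∞) := by
    rintro ⟨N, hb, hl⟩
    exact tendsto_infty_Ztop u N hb hl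
  refine ⟨⟨?_, ?_⟩, h2⟩
  · rintro ⟨L, hL⟩
    induction L using OnePoint.rec with
    | infty =>
      right
      have hb : ∃ N : ℕ, ∀ n, ∀ x ∈ wordLetters (u n), x < N := by
        by_contra h
        push_neg at h
        choose f x hx hxge using h
        set S : Set (OnePoint (FreeSemigroup ℕ)) :=
          (fun w : FreeSemigroup ℕ => (w : OnePoint (FreeSemigroup ℕ))) ''
            Set.range (fun N => u (f N)) with hS
        have hUopen : IsOpen Sᶜ := by
          refine isOpen_Ztop.mpr fun _ k => ?_
          refine ((Set.finite_Iio k).image (fun N => u (f N))).subset ?_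
          rintro w ⟨hwb, hw⟩
          rw [Set.notMem_compl_iff] at hw
          obtain ⟨v, ⟨N, hN⟩, hv⟩ := hw
          have hvw : v = w := OnePoint.coe_injective hv
          subst hvw
          refine ⟨N, ?_, hN⟩
          have := hwb (x N) (by rw [← hN]; exact hx N)
          have := hxge N
          simp only [Set.mem_Iio]
          omega
        have hmem : ∞ ∈ Sᶜ := by
          rintro ⟨v, -, hv⟩
          exact OnePoint.coe_ne_infty v hv
        have hmap := hL (hUopen.mem_nhds hmem)
        rw [mem_map] at hmap
        obtain ⟨M, hM⟩ := mem_atTop_sets.mp hmap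
        set B := (Finset.range M).sup (fun m => (wordLetters (u m)).foldr max 0) with hB
        have hfN : M ≤ f (B + 1) := by
          by_contra hlt
          push_neg at hlt
          have hs : (wordLetters (u (f (B + 1)))).foldr max 0
              ≤ (Finset.range M).sup (fun m => (wordLetters (u m)).foldr max 0) :=
            Finset.le_sup (f := fun m => (wordLetters (u m)).foldr max 0)
              (Finset.mem_range.mpr hlt)
          have h1 : x (B + 1) ≤ B := le_trans (le_foldr_max (hx (B + 1))) (by rw [hB]; exact hs)
          have h3 := hxge (B + 1)
          omega
        exact hM (f (B + 1)) hfN (Set.mem_image_of_mem _ ⟨B + 1, rfl⟩)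
      obtain ⟨N, hb⟩ := hb
      refine ⟨N, hb, ?_⟩
      rw [tendsto_atTop]
      intro K
      set U : Set (OnePoint (FreeSemigroup ℕ)) :=
        {z | z = ∞ ∨ ∃ w : FreeSemigroup ℕ, z = ↑w ∧ K ≤ w.length} with hU
      have hUopen : IsOpen U := by
        refine isOpen_Ztop.mpr fun _ k => ?_
        refine (finite_words k K).subset ?_
        rintro w ⟨hwb, hw⟩
        refine ⟨hwb, ?_⟩
        by_contra hlen
        exact hw (Or.inr ⟨w, rfl, (not_le.mp hlen).le⟩)
      have hmap := hL (hUopen.mem_nhds (Or.inl rfl))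
      rw [mem_map] at hmap
      filter_upwards [hmap] with n hn
      rcases (show ((u n : OnePoint (FreeSemigroup ℕ)) = ∞ ∨
          ∃ w : FreeSemigroup ℕ, (u n : OnePoint (FreeSemigroup ℕ)) = ↑w ∧ K ≤ w.length) from hn)
        with hinf | ⟨w, hw, hlen⟩
      · exact absurd hinf (OnePoint.coe_ne_infty _)
      · rw [OnePoint.coe_injective hw]
        exact hlen
    | coe w =>
      left
      have hmap := hL ((singleton_open_Ztop w).mem_nhds rfl)
      rw [mem_map] at hmap
      obtain ⟨M, hM⟩ := mem_atTop_sets.mp hmap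
      refine ⟨M, fun m hm => ?_⟩
      have h1 : u m = w := OnePoint.coe_injective (hM m hm)
      have h2 : u M = w := OnePoint.coe_injective (hM M le_rfl)
      rw [h1, h2]
  · rintro (⟨N, hN⟩ | hbd)
    · refine ⟨↑(u N), tendsto_nhds.mpr fun U _ hmem => ?_⟩
      filter_upwards [eventually_ge_atTop N] with m hm
      rw [Set.mem_preimage, hN m hm]
      exact hmem
    · exact ⟨∞, h2 hbd⟩
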